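/- Let E ⊆ ∂T be closed with cap^T(E) > 0, and let h : T → [0,∞) be an extremal function for cap^T(E), i.e. Σ_{x∈T} h(x)² = cap^T(E) and Ih(ζ) ≥ 1 for all ζ ∈ E outside a set of tree capacity zero. Set H(x) = Σ_{y ∈ P(x)} h(y) for x ∈ T. Then for every x ∈ T with x ≠ o, h(x) = (1 − H(x⁻¹)) · cap^{T_x}(E ∩ ∂T_x), where x⁻¹ denotes the parent of x. -/

import Mathlib

open scoped ENNReal NNReal
open Filter Topology

noncomputable section

/-- The vertex set of the dyadic tree `T`: finite binary strings. The boundary `∂T`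
is the set of infinite binary sequences `ℕ → Bool`. `pre ζ k` is the prefix of
length `k` of the boundary point `ζ`. -/
def pre (ζ : ℕ → Bool) (k : ℕ) : List Bool := List.ofFn (fun i : Fin k => ζ i)

/-- The tree condenser capacity `cap^T_n(E)`: the infimum of `Σ_x φ(x)²` over
`φ : T → [0,∞)` with `Iφ(ζ) = Σ_{x ∈ P(ζ)} φ(x) ≥ 1` on `E` and `φ(x) = 0`
whenever `d(x) ≤ n-1`.  For `n = 0` this is the tree capacity `cap^T(E)`. -/
noncomputable def treeCapN (n : ℕ) (E : Set (ℕ → Bool)) : ℝ≥0∞ :=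
  sInf { c | ∃ φ : List Bool → ℝ≥0,
    (∀ ζ ∈ E, 1 ≤ ∑' k : ℕ, (φ (pre ζ k) : ℝ≥0∞)) ∧
    (∀ x : List Bool, x.length < n → φ x = 0) ∧
    c = ∑' x : List Bool, (φ x : ℝ≥0∞) ^ 2 }

/-- The tree capacity `cap^T(E)` of a set `E ⊆ ∂T`. -/
noncomputable def treeCap (E : Set (ℕ → Bool)) : ℝ≥0∞ := treeCapN 0 E

/-- `∂T_x`: the boundary points extending the vertex `x`. -/
def bdSub (x : List Bool) : Set (ℕ → Bool) := { ζ | pre ζ x.length = x }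

/-- The tree capacity `cap^{T_x}(F)` computed in the subtree `T_x` rooted at `x`:
the sums `Iφ` are taken over the prefixes from `x` onward, and the energy is summed
over the vertices of `T_x` (the binary strings having `x` as a prefix). -/
noncomputable def treeCapAt (x : List Bool) (F : Set (ℕ → Bool)) : ℝ≥0∞ :=
  sInf { c | ∃ φ : List Bool → ℝ≥0,
    (∀ ζ ∈ F, 1 ≤ ∑' k : ℕ, (φ (pre ζ (x.length + k)) : ℝ≥0∞)) ∧
    c = ∑' y : { l : List Bool // x <+: l }, (φ y : ℝ≥0∞) ^ 2 }

namespace Aux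

@[simp] lemma pre_length (ζ : ℕ → Bool) (k : ℕ) : (pre ζ k).length = k := by
  simp [pre]

@[simp] lemma pre_zero (ζ : ℕ → Bool) : pre ζ 0 = [] := by simp [pre]

lemma pre_take (ζ : ℕ → Bool) {k m : ℕ} (h : k ≤ m) : (pre ζ m).take k = pre ζ k := by
  apply List.ext_getElem
  · simp [pre]; omega
  · intro i h1 h2
    simp only [pre, List.getElem_take, List.getElem_ofFn]

lemma pre_prefix (ζ : ℕ → Bool) {k m : ℕ} (h : k ≤ m) : pre ζ k <+: pre ζ m := by
  rw [← pre_take ζ h]; exact List.take_prefix _ _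

lemma pre_dropLast (ζ : ℕ → Bool) (k : ℕ) : (pre ζ (k+1)).dropLast = pre ζ k := by
  rw [List.dropLast_eq_take]
  simp only [pre_length]
  exact pre_take ζ (by omega)

lemma prefix_pre_iff {x : List Bool} {ζ : ℕ → Bool} {k : ℕ} :
    x <+: pre ζ k ↔ x.length ≤ k ∧ pre ζ x.length = x := by
  constructor
  · intro h
    have hl : x.length ≤ k := by simpa using h.length_le
    refine ⟨hl, ?_⟩
    rw [List.prefix_iff_eq_take] at h
    exact (h.trans (pre_take ζ hl)).symm
  · rintro ⟨hl, hx⟩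
    rw [← hx]; exact pre_prefix ζ hl

/-- split of an `ℝ≥0∞`-valued tsum over `ℕ` -/
lemma tsum_nat_split (f : ℕ → ℝ≥0∞) (n : ℕ) :
    ∑' k, f k = (∑ i ∈ Finset.range n, f i) + ∑' k, f (n + k) := by
  classical
  have h1 := Summable.tsum_add_tsum_compl (s := {m : ℕ | m < n}) (f := f)
    ENNReal.summable ENNReal.summable
  have h2 : ∑' (x : {m : ℕ | m < n}), f ↑x = ∑ i ∈ Finset.range n, f i := by
    rw [← Finset.tsum_subtype (Finset.range n) f]
    exact (Equiv.tsum_eq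
      ((Equiv.subtypeEquivRight (by intro m; simp [Finset.mem_range])) :
        {x : ℕ // x ∈ Finset.range n} ≃ {m : ℕ | m < n})
      (fun m : {m : ℕ | m < n} => f ↑m)).symm
  have h3 : ∑' (x : ({m : ℕ | m < n}ᶜ : Set ℕ)), f ↑x = ∑' k, f (n + k) := by
    exact (Equiv.tsum_eq
      (⟨fun k => ⟨n + k, by simp⟩, fun m => m.1 - n, fun k => by simp,
        fun m => by have hm : ¬ m.1 < n := m.2; ext; simp; omega⟩ :
        ℕ ≃ ({m : ℕ | m < n}ᶜ : Set ℕ))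
      (fun m : ({m : ℕ | m < n}ᶜ : Set ℕ) => f ↑m)).symm
  rw [← h1, h2, h3]

end Aux

namespace Aux

/-- `Iφ` computed from `x` onward. -/
def Ix (x : List Bool) (φ : List Bool → ℝ≥0) (ζ : ℕ → Bool) : ℝ≥0∞ :=
  ∑' k : ℕ, (φ (pre ζ (x.length + k)) : ℝ≥0∞)

/-- energy on the subtree `T_x`. -/
def En (x : List Bool) (φ : List Bool → ℝ≥0) : ℝ≥0∞ :=
  ∑' y : { l : List Bool // x <+: l }, (φ y : ℝ≥0∞) ^ 2

lemma treeCapAt_le {x : List Bool} {F : Set (ℕ → Bool)} {φ : List Bool → ℝ≥0}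
    (hadm : ∀ ζ ∈ F, 1 ≤ Ix x φ ζ) : treeCapAt x F ≤ En x φ :=
  sInf_le ⟨φ, hadm, rfl⟩

lemma le_treeCapAt {x : List Bool} {F : Set (ℕ → Bool)} {c : ℝ≥0∞}
    (hc : ∀ φ : List Bool → ℝ≥0, (∀ ζ ∈ F, 1 ≤ Ix x φ ζ) → c ≤ En x φ) :
    c ≤ treeCapAt x F :=
  le_sInf (by rintro d ⟨φ, h1, rfl⟩; exact hc φ h1)

lemma treeCap_eq (F : Set (ℕ → Bool)) : treeCap F = treeCapAt [] F := by
  unfold treeCap treeCapN treeCapAt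
  congr 1
  ext c
  constructor
  · rintro ⟨φ, h1, -, rfl⟩
    refine ⟨φ, fun ζ hζ => by simpa using h1 ζ hζ, ?_⟩
    exact ((Equiv.subtypeUnivEquiv (fun l => List.nil_prefix)).tsum_eq
      (fun l : List Bool => (φ l : ℝ≥0∞) ^ 2)).symm
  · rintro ⟨φ, h1, rfl⟩
    refine ⟨φ, fun ζ hζ => by simpa using h1 ζ hζ, by simp, ?_⟩
    exact ((Equiv.subtypeUnivEquiv (fun l => List.nil_prefix)).tsum_eq
      (fun l : List Bool => (φ l : ℝ≥0∞) ^ 2))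

lemma treeCapAt_le_one {x : List Bool} {F : Set (ℕ → Bool)} (hF : F ⊆ bdSub x) :
    treeCapAt x F ≤ 1 := by
  classical
  have hadm : ∀ ζ ∈ F, 1 ≤ Ix x (fun l => if l = x then 1 else 0) ζ := by
    intro ζ hζ
    have h0 : ((if pre ζ (x.length + 0) = x then (1:ℝ≥0) else 0 : ℝ≥0) : ℝ≥0∞)
        ≤ Ix x (fun l => if l = x then 1 else 0) ζ := ENNReal.le_tsum 0
    have hx : pre ζ (x.length + 0) = x := hF hζ
    rw [hx, if_pos rfl] at h0
    simpa using h0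
  refine (treeCapAt_le hadm).trans ?_
  unfold En
  rw [tsum_eq_single (⟨x, List.prefix_refl x⟩ : { l : List Bool // x <+: l }) ?_]
  · simp
  · intro b hb
    have : (b : List Bool) ≠ x := fun hbx => hb (Subtype.ext hbx)
    simp [this]

lemma sq_add_le (a b δ : ℝ≥0) (hδ : δ ≠ 0) :
    ((a + b : ℝ≥0) : ℝ≥0∞) ^ 2
      ≤ (1 + (δ:ℝ≥0∞)) * (a : ℝ≥0∞) ^ 2 + (1 + (δ:ℝ≥0∞)⁻¹) * (b : ℝ≥0∞) ^ 2 := by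
  have hδ' : (0:ℝ) < (δ:ℝ) := by
    have := pos_iff_ne_zero.2 hδ
    exact_mod_cast this
  have key : (a + b) ^ 2 ≤ (1 + δ) * a ^ 2 + (1 + δ⁻¹) * b ^ 2 := by
    rw [← NNReal.coe_le_coe]
    push_cast
    have hmul : (δ:ℝ) * ((a+b):ℝ)^2 ≤ (δ:ℝ) * ((1 + δ) * (a:ℝ)^2 + (1 + (δ:ℝ)⁻¹) * (b:ℝ)^2) := by
      have hc : (δ:ℝ) * (δ:ℝ)⁻¹ = 1 := mul_inv_cancel₀ (ne_of_gt hδ')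
      nlinarith [sq_nonneg ((δ:ℝ) * a - b), sq_nonneg ((a:ℝ) - b), a.coe_nonneg, b.coe_nonneg]
    exact le_of_mul_le_mul_left hmul hδ'
  calc ((a + b : ℝ≥0) : ℝ≥0∞) ^ 2
      = (((a + b) ^ 2 : ℝ≥0) : ℝ≥0∞) := by push_cast; ring
    _ ≤ (((1 + δ) * a ^ 2 + (1 + δ⁻¹) * b ^ 2 : ℝ≥0) : ℝ≥0∞) := ENNReal.coe_le_coe.2 key
    _ = (1 + (δ:ℝ≥0∞)) * (a : ℝ≥0∞) ^ 2 + (1 + (δ:ℝ≥0∞)⁻¹) * (b : ℝ≥0∞) ^ 2 := by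
        push_cast [ENNReal.coe_inv hδ]
        ring

lemma qe_le {x : List Bool} {F N : Set (ℕ → Bool)} (hN : treeCapAt x N = 0)
    (φ : List Bool → ℝ≥0) (hadm : ∀ ζ ∈ F, ζ ∉ N → 1 ≤ Ix x φ ζ) :
    treeCapAt x F ≤ En x φ := by
  rcases eq_or_ne (En x φ) ⊤ with hE | hE
  · exact hE ▸ le_top
  have step1 : ∀ δ : ℝ≥0, δ ≠ 0 → treeCapAt x F ≤ (1 + (δ:ℝ≥0∞)) * En x φ := by
    intro δ hδ
    refine ENNReal.le_of_forall_pos_le_add fun ε hε hlt => ?_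
    have hden' : (1 + (δ:ℝ≥0∞)⁻¹) ≠ ⊤ :=
      ENNReal.add_ne_top.2 ⟨ENNReal.one_ne_top, ENNReal.inv_ne_top.2 (by exact_mod_cast hδ)⟩
    set η : ℝ≥0∞ := (ε:ℝ≥0∞) / (1 + (δ:ℝ≥0∞)⁻¹) with hη
    have hηpos : 0 < η := ENNReal.div_pos (by exact_mod_cast hε.ne') hden'
    have hlt2 : treeCapAt x N < η := hN ▸ hηpos
    obtain ⟨d, ⟨ψ, hψadm, rfl⟩, hd⟩ := sInf_lt_iff.1 hlt2
    have hψadm' : ∀ ζ ∈ N, 1 ≤ Ix x ψ ζ := hψadm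
    have hd' : En x ψ < η := hd
    have hadm2 : ∀ ζ ∈ F, 1 ≤ Ix x (fun l => φ l + ψ l) ζ := by
      intro ζ hζ
      by_cases hζN : ζ ∈ N
      · refine le_trans (hψadm' ζ hζN) (ENNReal.tsum_le_tsum fun k => ?_)
        push_cast
        exact le_add_self
      · refine le_trans (hadm ζ hζ hζN) (ENNReal.tsum_le_tsum fun k => ?_)
        push_cast
        exact le_self_add
    have hEn2 : En x (fun l => φ l + ψ l)
        ≤ (1 + (δ:ℝ≥0∞)) * En x φ + (1 + (δ:ℝ≥0∞)⁻¹) * En x ψ := by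
      unfold En
      rw [← ENNReal.tsum_mul_left, ← ENNReal.tsum_mul_left, ← ENNReal.tsum_add]
      exact ENNReal.tsum_le_tsum fun y => sq_add_le (φ y) (ψ y) δ hδ
    calc treeCapAt x F ≤ En x (fun l => φ l + ψ l) := treeCapAt_le hadm2
      _ ≤ (1 + (δ:ℝ≥0∞)) * En x φ + (1 + (δ:ℝ≥0∞)⁻¹) * En x ψ := hEn2
      _ ≤ (1 + (δ:ℝ≥0∞)) * En x φ + (1 + (δ:ℝ≥0∞)⁻¹) * η := by gcongr
      _ ≤ (1 + (δ:ℝ≥0∞)) * En x φ + (ε:ℝ≥0∞) := by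
          gcongr
          rw [hη]
          exact ENNReal.mul_div_le
  refine ENNReal.le_of_forall_pos_le_add fun ε hε hlt => ?_
  rcases eq_or_ne (En x φ) 0 with h0 | h0
  · have := step1 1 one_ne_zero
    rw [h0, mul_zero] at this
    simpa using this.trans zero_le
  · have hδ0 : (ε:ℝ≥0∞) / En x φ ≠ 0 :=
      ne_of_gt (ENNReal.div_pos (by exact_mod_cast hε.ne') hE)
    have hδtop : (ε:ℝ≥0∞) / En x φ ≠ ⊤ := by
      simp [ENNReal.div_eq_top, h0]
    set δ' : ℝ≥0 := ((ε:ℝ≥0∞) / En x φ).toNNReal with hδ'def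
    have hδ' : (δ' : ℝ≥0∞) = (ε:ℝ≥0∞) / En x φ := ENNReal.coe_toNNReal hδtop
    have hδ'0 : δ' ≠ 0 := by
      intro hc
      rw [hc] at hδ'
      exact hδ0 (by simpa using hδ'.symm)
    have hs := step1 δ' hδ'0
    rw [add_mul, one_mul, hδ'] at hs
    refine hs.trans ?_
    gcongr
    exact le_of_eq (ENNReal.div_mul_cancel h0 hE)

lemma tsum_subtype_le (f : List Bool → ℝ≥0∞) (s : Set (List Bool)) :
    ∑' (y : s), f ↑y ≤ ∑' l, f l := by
  rw [tsum_subtype]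
  exact ENNReal.tsum_le_tsum fun l => Set.indicator_le_self s f l

lemma nnreal_cs (s : Finset ℕ) (f : ℕ → ℝ≥0) :
    (∑ i ∈ s, f i) ^ 2 ≤ (s.card : ℝ≥0) * ∑ i ∈ s, (f i) ^ 2 := by
  have := Finset.sum_mul_sq_le_sq_mul_sq s (fun _ => (1:ℝ≥0)) f
  simpa using this

lemma null_transfer {N : Set (ℕ → Bool)} (hN : treeCap N = 0) (x : List Bool) :
    treeCapAt x (N ∩ bdSub x) = 0 := by
  classical
  refine le_antisymm ?_ zero_le
  refine ENNReal.le_of_forall_pos_le_add fun ε hε _ => ?_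
  rw [zero_add]
  set n := x.length with hn
  set C : ℝ≥0∞ := (n:ℝ≥0∞) + 2 with hC
  have hCtop : C ≠ ⊤ := by simp [hC]
  set η : ℝ≥0∞ := (ε:ℝ≥0∞) / C with hη
  have hηpos : 0 < η := ENNReal.div_pos (by exact_mod_cast hε.ne') hCtop
  have hcap : treeCap N < η := hN ▸ hηpos
  unfold treeCap treeCapN at hcap
  obtain ⟨d, ⟨φ, hφadm, -, rfl⟩, hd⟩ := sInf_lt_iff.1 hcap
  set S : ℝ≥0 := ∑ k ∈ Finset.range (n+1), φ (x.take k) with hS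
  set ψ : List Bool → ℝ≥0 := fun l => if l = x then S else φ l with hψ
  have hadm : ∀ ζ ∈ N ∩ bdSub x, 1 ≤ Ix x ψ ζ := by
    intro ζ hζ
    have hbd : pre ζ n = x := hζ.2
    have key : Ix x ψ ζ = ∑' k, (φ (pre ζ k) : ℝ≥0∞) := by
      unfold Ix
      rw [tsum_nat_split (fun k => (ψ (pre ζ (n + k)) : ℝ≥0∞)) 1,
          tsum_nat_split (fun k => (φ (pre ζ k) : ℝ≥0∞)) (n+1)]
      congr 1
      · rw [Finset.sum_range_one]
        have hx0 : ψ (pre ζ (n + 0)) = S := by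
          have hpz : pre ζ (n + 0) = x := hbd
          rw [hpz, hψ]
          simp
        rw [hx0, hS, ENNReal.coe_finset_sum]
        refine Finset.sum_congr rfl fun k hk => ?_
        have hk' : k ≤ n := by
          have := Finset.mem_range.1 hk; omega
        rw [← hbd, pre_take ζ hk']
      · refine tsum_congr fun k => ?_
        have hne : pre ζ (n + (1 + k)) ≠ x := by
          intro hcon
          have := congrArg List.length hcon
          simp [hn] at this
        have harg : n + (1 + k) = (n + 1) + k := by omega
        rw [hψ]
        simp only [if_neg hne]
        rw [harg]
    rw [key]
    exact hφadm ζ hζ.1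
  refine (treeCapAt_le hadm).trans ?_
  have hhead : ((S : ℝ≥0∞)) ^ 2 ≤ ((n:ℝ≥0∞) + 1) * ∑' l, (φ l : ℝ≥0∞) ^ 2 := by
    have h1 : (S : ℝ≥0) ^ 2 ≤ ((n:ℝ≥0) + 1) * ∑ k ∈ Finset.range (n+1), (φ (x.take k)) ^ 2 := by
      have := nnreal_cs (Finset.range (n+1)) (fun k => φ (x.take k))
      simpa [hS] using this
    have h2 : (∑ k ∈ Finset.range (n+1), ((φ (x.take k) : ℝ≥0∞)) ^ 2)
        ≤ ∑' l, (φ l : ℝ≥0∞) ^ 2 := by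
      have hinj : ∀ a ∈ Finset.range (n+1), ∀ b ∈ Finset.range (n+1),
          x.take a = x.take b → a = b := by
        intro a ha b hb hab
        have ha' : a ≤ n := by have := Finset.mem_range.1 ha; omega
        have hb' : b ≤ n := by have := Finset.mem_range.1 hb; omega
        have := congrArg List.length hab
        simp [hn] at this
        omega
      have himg := Finset.sum_image (s := Finset.range (n+1))
        (g := fun k => List.take k x) (f := fun l => ((φ l : ℝ≥0∞)) ^ 2) hinj
      rw [← himg]
      exact ENNReal.sum_le_tsum _
    calc ((S : ℝ≥0∞)) ^ 2 = (((S^2 : ℝ≥0)) : ℝ≥0∞) := by push_cast; ring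
      _ ≤ ((((n:ℝ≥0) + 1) * ∑ k ∈ Finset.range (n+1), (φ (x.take k)) ^ 2 : ℝ≥0) : ℝ≥0∞) :=
          ENNReal.coe_le_coe.2 h1
      _ = ((n:ℝ≥0∞) + 1) * ∑ k ∈ Finset.range (n+1), ((φ (x.take k) : ℝ≥0∞)) ^ 2 := by
          push_cast; ring
      _ ≤ ((n:ℝ≥0∞) + 1) * ∑' l, (φ l : ℝ≥0∞) ^ 2 := by gcongr
  have hEn : En x ψ ≤ C * ∑' l, (φ l : ℝ≥0∞) ^ 2 := by
    unfold En
    rw [ENNReal.tsum_eq_add_tsum_ite (⟨x, List.prefix_refl x⟩ : { l : List Bool // x <+: l })]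
    refine le_trans (add_le_add ?_ ?_)
      (le_of_eq (show ((n:ℝ≥0∞) + 1) * (∑' l, (φ l : ℝ≥0∞) ^ 2) + ∑' l, (φ l : ℝ≥0∞) ^ 2
        = C * ∑' l, (φ l : ℝ≥0∞) ^ 2 by rw [hC]; ring))
    · have hxS : ψ x = S := by rw [hψ]; simp
      simpa [hxS] using hhead
    · refine le_trans (ENNReal.tsum_le_tsum (fun y => ?_))
        (tsum_subtype_le (fun l => (φ l : ℝ≥0∞) ^ 2) {l | x <+: l})
      by_cases hy : y = (⟨x, List.prefix_refl x⟩ : { l : List Bool // x <+: l })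
      · simp [hy]
      · have hyx : (y : List Bool) ≠ x := fun hc => hy (Subtype.ext hc)
        rw [if_neg hy, hψ]
        simp [hyx]
  refine hEn.trans ?_
  calc C * ∑' l, (φ l : ℝ≥0∞) ^ 2 ≤ C * η := by
        exact mul_le_mul_right (le_of_lt hd) C
    _ ≤ (ε:ℝ≥0∞) := by rw [hη]; exact ENNReal.mul_div_le

def HH (h : List Bool → ℝ≥0) (l : List Bool) : ℝ≥0 :=
  ∑ k ∈ Finset.range (l.length + 1), h (l.take k)

lemma HH_eq (h : List Bool → ℝ≥0) {l : List Bool} (hl : l ≠ []) :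
    HH h l = HH h l.dropLast + h l := by
  have hlen : 1 ≤ l.length := List.length_pos_iff.2 hl
  unfold HH
  rw [Finset.sum_range_succ, List.take_length]
  congr 1
  have hlen' : l.dropLast.length + 1 = l.length := by
    rw [List.length_dropLast]; omega
  rw [hlen']
  refine Finset.sum_congr rfl fun k hk => ?_
  have hk' : k ≤ l.length - 1 := by have := Finset.mem_range.1 hk; omega
  rw [List.dropLast_eq_take, List.take_take, min_eq_left hk']

lemma HH_pre (h : List Bool → ℝ≥0) (ζ : ℕ → Bool) (K : ℕ) :
    HH h (pre ζ K) = ∑ k ∈ Finset.range (K + 1), h (pre ζ k) := by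
  unfold HH
  rw [pre_length]
  refine Finset.sum_congr rfl fun k hk => ?_
  rw [pre_take ζ (by have := Finset.mem_range.1 hk; omega)]

lemma HH_nil (h : List Bool → ℝ≥0) : HH h [] = h [] := by
  unfold HH
  simp

lemma HH_mono_pre (h : List Bool → ℝ≥0) (ζ : ℕ → Bool) {K K' : ℕ} (hK : K ≤ K') :
    HH h (pre ζ K) ≤ HH h (pre ζ K') := by
  rw [HH_pre, HH_pre]
  exact Finset.sum_le_sum_of_subset (Finset.range_subset_range.2 (by omega))

lemma En_nil (φ : List Bool → ℝ≥0) : En [] φ = ∑' l : List Bool, (φ l : ℝ≥0∞) ^ 2 :=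
  (Equiv.subtypeUnivEquiv (fun l => List.nil_prefix)).tsum_eq
    (fun l : List Bool => (φ l : ℝ≥0∞) ^ 2)

lemma Ix_nil (φ : List Bool → ℝ≥0) (ζ : ℕ → Bool) :
    Ix [] φ ζ = ∑' k, (φ (pre ζ k) : ℝ≥0∞) :=
  tsum_congr fun k => by norm_num

/-- For an extremal function, `H ≤ 1` everywhere. -/
lemma HH_le_one
    (E N : Set (ℕ → Bool)) (h : List Bool → ℝ≥0)
    (hen : (∑' x : List Bool, (h x : ℝ≥0∞) ^ 2) = treeCap E)
    (hN : treeCap N = 0)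
    (hadm : ∀ ζ ∈ E \ N, 1 ≤ ∑' k : ℕ, (h (pre ζ k) : ℝ≥0∞))
    (hfin : treeCap E ≠ ⊤) :
    ∀ l : List Bool, HH h l ≤ 1 := by
  classical
  set h' : List Bool → ℝ≥0 := fun l =>
    if l = [] then min (h []) 1 else min (HH h l) 1 - min (HH h l.dropLast) 1 with hh'
  -- (a) h' ≤ h
  have ha : ∀ l, h' l ≤ h l := by
    intro l
    rw [hh']
    by_cases hl : l = []
    · simp [hl]
    · simp only [if_neg hl]
      rw [tsub_le_iff_right]
      have : HH h l = HH h l.dropLast + h l := HH_eq h hl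
      calc min (HH h l) 1 ≤ min (HH h l.dropLast + h l) (1 + h l) := by
            rw [← this]
            exact le_min (min_le_left _ _) (le_add_right (min_le_right _ _))
        _ = min (HH h l.dropLast) 1 + h l := min_add_add_right _ _ _
        _ = h l + min (HH h l.dropLast) 1 := add_comm _ _
      -- rewrite: h l + min _ 1 vs min _ 1 + h l
  -- (b) partial sums
  have hb : ∀ ζ K, ∑ k ∈ Finset.range (K + 1), h' (pre ζ k) = min (HH h (pre ζ K)) 1 := by
    intro ζ K
    induction K with
    | zero =>
        rw [Finset.sum_range_one]
        simp [hh', HH_nil]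
    | succ K ih =>
        rw [Finset.sum_range_succ, ih]
        have hne : pre ζ (K + 1) ≠ [] := by
          intro hc
          have := congrArg List.length hc
          simp at this
        have : h' (pre ζ (K + 1))
            = min (HH h (pre ζ (K + 1))) 1 - min (HH h (pre ζ K)) 1 := by
          rw [hh']
          simp only [if_neg hne, pre_dropLast]
        rw [this, add_tsub_cancel_of_le]
        exact min_le_min (HH_mono_pre h ζ (by omega)) le_rfl
  -- (c) quasi-admissibility
  have hc : ∀ ζ ∈ E \ N, 1 ≤ ∑' k : ℕ, (h' (pre ζ k) : ℝ≥0∞) := by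
    intro ζ hζ
    by_cases hex : ∃ K, 1 ≤ HH h (pre ζ K)
    · obtain ⟨K, hK⟩ := hex
      have h1 : ((min (HH h (pre ζ K)) 1 : ℝ≥0) : ℝ≥0∞)
          ≤ ∑' k : ℕ, (h' (pre ζ k) : ℝ≥0∞) := by
        rw [← hb ζ K]
        push_cast
        exact ENNReal.sum_le_tsum _
      rw [min_eq_right hK] at h1
      simpa using h1
    · push_neg at hex
      have heq : ∑' k : ℕ, (h' (pre ζ k) : ℝ≥0∞) = ∑' k : ℕ, (h (pre ζ k) : ℝ≥0∞) := by
        rw [ENNReal.tsum_eq_iSup_nat, ENNReal.tsum_eq_iSup_nat]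
        congr 1
        funext n
        cases n with
        | zero => simp
        | succ K =>
            have e1 : ∑ a ∈ Finset.range (K + 1), (h' (pre ζ a) : ℝ≥0∞)
                = ((∑ a ∈ Finset.range (K + 1), h' (pre ζ a) : ℝ≥0) : ℝ≥0∞) := by
              push_cast; rfl
            have e2 : ∑ a ∈ Finset.range (K + 1), (h (pre ζ a) : ℝ≥0∞)
                = ((∑ a ∈ Finset.range (K + 1), h (pre ζ a) : ℝ≥0) : ℝ≥0∞) := by
              push_cast; rfl
            rw [e1, e2, hb ζ K, min_eq_left (le_of_lt (hex K)), HH_pre]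
      rw [heq]
      exact hadm ζ hζ
  -- (d) energies agree
  have hacoe : ∀ l, ((h' l : ℝ≥0∞)) ≤ (h l : ℝ≥0∞) := fun l => by exact_mod_cast ha l
  have hle : (∑' l : List Bool, (h' l : ℝ≥0∞) ^ 2) ≤ ∑' l : List Bool, (h l : ℝ≥0∞) ^ 2 :=
    ENNReal.tsum_le_tsum fun l => pow_le_pow_left' (hacoe l) 2
  have hge : treeCap E ≤ ∑' l : List Bool, (h' l : ℝ≥0∞) ^ 2 := by
    rw [treeCap_eq, ← En_nil h']
    refine qe_le (x := []) (N := N) ?_ h' ?_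
    · rw [← treeCap_eq]; exact hN
    · intro ζ hζ hζN
      rw [Ix_nil]
      exact hc ζ ⟨hζ, hζN⟩
  have hEq : (∑' l : List Bool, (h' l : ℝ≥0∞) ^ 2) = ∑' l : List Bool, (h l : ℝ≥0∞) ^ 2 :=
    le_antisymm hle (by rw [hen]; exact hge)
  -- (e) h' = h
  have hpt : ∀ l, h' l = h l := by
    intro l
    by_contra hne
    have hlt : (h' l : ℝ≥0∞) ^ 2 < (h l : ℝ≥0∞) ^ 2 := by
      have hlt' : ((h' l : ℝ≥0∞)) < (h l : ℝ≥0∞) := by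
        exact_mod_cast lt_of_le_of_ne (ha l) hne
      exact ENNReal.pow_lt_pow_left (by norm_num) hlt'
    have hfin' : (∑' l : List Bool, (h' l : ℝ≥0∞) ^ 2) ≠ ⊤ := by
      rw [hEq, hen]; exact hfin
    have := ENNReal.tsum_lt_tsum hfin'
      (fun a => pow_le_pow_left' (hacoe a) 2) hlt
    rw [hEq] at this
    exact lt_irrefl _ this
  -- conclude by induction on length
  have main : ∀ n : ℕ, ∀ l : List Bool, l.length = n → HH h l ≤ 1 := by
    intro n
    induction n with
    | zero =>
        intro l hl
        have : l = [] := List.length_eq_zero_iff.1 hl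
        subst this
        rw [HH_nil, ← hpt []]
        simp [hh']
    | succ n ih =>
        intro l hl
        have hlne : l ≠ [] := by
          intro hc; subst hc; simp at hl
        have hp : HH h l.dropLast ≤ 1 := by
          refine ih l.dropLast ?_
          rw [List.length_dropLast, hl]
          omega
        have hhl : h l = min (HH h l) 1 - min (HH h l.dropLast) 1 := by
          rw [← hpt l, hh']
          simp only [if_neg hlne]
        rw [HH_eq h hlne, hhl, min_eq_left hp]
        calc HH h l.dropLast + (min (HH h l) 1 - HH h l.dropLast)
            ≤ HH h l.dropLast + (1 - HH h l.dropLast) := by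
              gcongr
              exact min_le_right _ _
          _ = 1 := add_tsub_cancel_of_le hp
  exact fun l => main l.length l rfl

lemma head_eq (h : List Bool → ℝ≥0) {x : List Bool} (hx : x ≠ []) {ζ : ℕ → Bool}
    (hbd : pre ζ x.length = x) :
    ∑ k ∈ Finset.range x.length, (h (pre ζ k) : ℝ≥0∞) = ((HH h x.dropLast : ℝ≥0) : ℝ≥0∞) := by
  unfold HH
  rw [ENNReal.coe_finset_sum]
  have hlen : x.dropLast.length + 1 = x.length := by
    rw [List.length_dropLast]
    have := List.length_pos_iff.2 hx
    omega
  rw [hlen]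
  refine Finset.sum_congr rfl fun k hk => ?_
  have hk' : k < x.length := Finset.mem_range.1 hk
  congr 1
  rw [← hbd]
  obtain ⟨m, hm⟩ : ∃ m, x.length = m + 1 :=
    ⟨x.length - 1, by have := List.length_pos_iff.2 hx; omega⟩
  rw [hm, pre_dropLast, pre_take ζ (by omega)]

lemma treeCap_le_one (E : Set (ℕ → Bool)) : treeCap E ≤ 1 := by
  rw [treeCap_eq]
  refine treeCapAt_le_one fun ζ _ => ?_
  simp [bdSub]

/-- splitting of the full energy into the subtree part and the rest -/
lemma energy_split (g : List Bool → ℝ≥0) (x : List Bool) :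
    (∑' l : List Bool, (g l : ℝ≥0∞) ^ 2)
      = En x g + ∑' (y : ({l : List Bool | x <+: l}ᶜ : Set (List Bool))), (g ↑y : ℝ≥0∞) ^ 2 := by
  rw [← Summable.tsum_add_tsum_compl (s := {l : List Bool | x <+: l})
    (f := fun l => (g l : ℝ≥0∞) ^ 2) ENNReal.summable ENNReal.summable]
  rfl

lemma tsum_delta {ζ : ℕ → Bool} {x : List Bool} (hbd : pre ζ x.length = x) (s : ℝ≥0) :
    ∑' k : ℕ, ((if pre ζ (x.length + k) = x then s else 0 : ℝ≥0) : ℝ≥0∞) = s := by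
  rw [tsum_eq_single 0 ?_]
  · rw [show pre ζ (x.length + 0) = x from hbd, if_pos rfl]
  · intro k hk
    have hne : pre ζ (x.length + k) ≠ x := by
      intro hc
      have := congrArg List.length hc
      simp at this
      omega
    rw [if_neg hne]
    simp

lemma energy_ite (ψ : List Bool → ℝ≥0) (x : List Bool) (t u : ℝ≥0)
    (g : List Bool → ℝ≥0) (hgx : g x = u)
    (hgo : ∀ l, x <+: l → l ≠ x → g l = t * ψ l) :
    En x g = (u : ℝ≥0∞) ^ 2 + (t : ℝ≥0∞) ^ 2
      * ∑' y : {l : List Bool // x <+: l},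
          (if y = (⟨x, List.prefix_refl x⟩ : {l : List Bool // x <+: l}) then 0
            else (ψ (y : List Bool) : ℝ≥0∞) ^ 2) := by
  unfold En
  rw [ENNReal.tsum_eq_add_tsum_ite (⟨x, List.prefix_refl x⟩ : {l : List Bool // x <+: l})]
  congr 1
  · rw [show g ((⟨x, List.prefix_refl x⟩ : {l : List Bool // x <+: l}) : List Bool) = u from hgx]
  · rw [← ENNReal.tsum_mul_left]
    refine tsum_congr fun y => ?_
    by_cases hy : y = (⟨x, List.prefix_refl x⟩ : {l : List Bool // x <+: l})
    · rw [if_pos hy, if_pos hy, mul_zero]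
    · have hyx : (y : List Bool) ≠ x := fun hc => hy (Subtype.ext hc)
      rw [if_neg hy, if_neg hy, hgo _ y.2 hyx]
      push_cast
      ring

lemma pasted_adm (h φ : List Bool → ℝ≥0) {x : List Bool} (hx : x ≠ [])
    (β : ℝ≥0) (hβ : HH h x.dropLast + β = 1)
    {ζ : ℕ → Bool}
    (hIh : 1 ≤ ∑' k : ℕ, (h (pre ζ k) : ℝ≥0∞))
    (hIφ : pre ζ x.length = x → 1 ≤ Ix x φ ζ) :
    1 ≤ Ix [] (fun l => if x <+: l then β * φ l else h l) ζ := by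
  rw [Ix_nil]
  by_cases hbd : pre ζ x.length = x
  · rw [tsum_nat_split _ x.length]
    have hhead : ∑ k ∈ Finset.range x.length,
        ((if x <+: pre ζ k then β * φ (pre ζ k) else h (pre ζ k) : ℝ≥0) : ℝ≥0∞)
        = ((HH h x.dropLast : ℝ≥0) : ℝ≥0∞) := by
      rw [← head_eq h hx hbd]
      refine Finset.sum_congr rfl fun k hk => ?_
      have hk' : k < x.length := Finset.mem_range.1 hk
      have hnp : ¬ x <+: pre ζ k := by
        intro hc
        have := hc.length_le
        rw [pre_length] at this
        omega
      rw [if_neg hnp]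
    have htail : (∑' k : ℕ,
        ((if x <+: pre ζ (x.length + k) then β * φ (pre ζ (x.length + k))
          else h (pre ζ (x.length + k)) : ℝ≥0) : ℝ≥0∞))
        = (β : ℝ≥0∞) * Ix x φ ζ := by
      unfold Ix
      rw [← ENNReal.tsum_mul_left]
      refine tsum_congr fun k => ?_
      have hpref : x <+: pre ζ (x.length + k) := prefix_pre_iff.2 ⟨by omega, hbd⟩
      rw [if_pos hpref]
      push_cast
      ring
    rw [hhead, htail]
    calc (1:ℝ≥0∞) = ((HH h x.dropLast : ℝ≥0) : ℝ≥0∞) + (β : ℝ≥0∞) := by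
          rw [← ENNReal.coe_add, hβ, ENNReal.coe_one]
      _ ≤ ((HH h x.dropLast : ℝ≥0) : ℝ≥0∞) + (β : ℝ≥0∞) * Ix x φ ζ := by
          gcongr
          calc (β : ℝ≥0∞) = (β : ℝ≥0∞) * 1 := (mul_one _).symm
            _ ≤ (β : ℝ≥0∞) * Ix x φ ζ := by gcongr; exact hIφ hbd
  · have hnp : ∀ k, ¬ x <+: pre ζ k := fun k hc => hbd (prefix_pre_iff.1 hc).2
    calc (1:ℝ≥0∞) ≤ ∑' k : ℕ, (h (pre ζ k) : ℝ≥0∞) := hIh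
      _ = _ := (tsum_congr fun k => by rw [if_neg (hnp k)]).symm

lemma pasted_energy (h φ : List Bool → ℝ≥0) (β : ℝ≥0) (x : List Bool) :
    En x (fun l => if x <+: l then β * φ l else h l) = (β : ℝ≥0∞) ^ 2 * En x φ := by
  unfold En
  rw [← ENNReal.tsum_mul_left]
  refine tsum_congr fun y => ?_
  show ((if x <+: (y : List Bool) then β * φ (y : List Bool) else h (y : List Bool) : ℝ≥0) : ℝ≥0∞) ^ 2
      = (β : ℝ≥0∞) ^ 2 * (φ (y : List Bool) : ℝ≥0∞) ^ 2
  rw [if_pos y.2]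
  push_cast
  ring

lemma aux_nonneg {K C δ : ℝ} (hC : 0 ≤ C) (hδ : 0 < δ)
    (H : ∀ s : ℝ, 0 < s → s ≤ δ → 0 ≤ 2 * s * K + s ^ 2 * C) : 0 ≤ K := by
  by_contra hK
  push_neg at hK
  set s := min δ (-K / (C + 1)) with hs
  have hs0 : 0 < s := lt_min hδ (div_pos (by linarith) (by linarith))
  have h1 := H s hs0 (min_le_left _ _)
  have h2 : s ≤ -K / (C + 1) := min_le_right _ _
  have h3 : s * (C + 1) ≤ -K := by
    rw [← le_div_iff₀ (by positivity)]
    exact h2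
  nlinarith [mul_pos hs0 hs0, mul_le_mul_of_nonneg_left h3 (le_of_lt hs0)]

end Aux

/-- Let `E ⊆ ∂T` be closed with `cap^T(E) > 0` and let `h` be an
extremal function for `cap^T(E)`, i.e. `Σ_x h(x)² = cap^T(E)` and `Ih(ζ) ≥ 1` for
all `ζ ∈ E` outside a set of tree capacity zero. With
`H(x) = Σ_{y ∈ P(x)} h(y)`, for every `x ≠ o` one has
`h(x) = (1 - H(x⁻¹)) · cap^{T_x}(E ∩ ∂T_x)`, where `x⁻¹` is the parent of `x`
(here `x⁻¹ = x.dropLast` and `H(x⁻¹)` is the sum of `h` over the prefixes of `x⁻¹`,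
including `x⁻¹` itself). -/
theorem extremal_function_subtree_identity
    (E : Set (ℕ → Bool)) (hE : IsClosed E) (hpos : 0 < treeCap E)
    (h : List Bool → ℝ≥0)
    (hen : (∑' x : List Bool, (h x : ℝ≥0∞) ^ 2) = treeCap E)
    (hadm : ∃ N : Set (ℕ → Bool), treeCap N = 0 ∧
      ∀ ζ ∈ E \ N, 1 ≤ ∑' k : ℕ, (h (pre ζ k) : ℝ≥0∞)) :
    ∀ x : List Bool, x ≠ [] →
      (h x : ℝ)
        = (1 - ∑ k ∈ Finset.range (x.dropLast.length + 1), (h (x.dropLast.take k) : ℝ))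
            * (treeCapAt x (E ∩ bdSub x)).toReal := by
  intro x hx
  obtain ⟨N, hN0, hadmE⟩ := hadm
  have hfin : treeCap E ≠ ⊤ := ne_top_of_le_ne_top ENNReal.one_ne_top (Aux.treeCap_le_one E)
  have hH1 : ∀ l, Aux.HH h l ≤ 1 := Aux.HH_le_one E N h hen hN0 hadmE hfin
  set Hp : ℝ≥0 := Aux.HH h x.dropLast with hHp
  have hgoalsum : ∑ k ∈ Finset.range (x.dropLast.length + 1), ((h (x.dropLast.take k)) : ℝ)
      = (Hp : ℝ) := by
    rw [hHp]
    unfold Aux.HH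
    push_cast
    rfl
  rw [hgoalsum]
  set c := treeCapAt x (E ∩ bdSub x) with hc
  have hc1 : c ≤ 1 := Aux.treeCapAt_le_one fun ζ hζ => hζ.2
  have hcfin : c ≠ ⊤ := ne_top_of_le_ne_top ENNReal.one_ne_top hc1
  have hHple : Hp ≤ 1 := hH1 x.dropLast
  have hxkey : h x ≤ 1 - Hp := by
    have h1 := hH1 x
    rw [Aux.HH_eq h hx] at h1
    exact le_tsub_of_add_le_left h1
  rcases eq_or_lt_of_le hHple with hHp1 | hHp1
  · -- H(p) = 1 : both sides vanish
    have hzero : h x = 0 := le_antisymm (by rw [← hHp1] at hxkey; simpa using hxkey) zero_le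
    have hHpr : (Hp : ℝ) = 1 := by rw [hHp1]; simp
    rw [hzero, hHpr]
    simp
  -- main case : H(p) < 1
  set β : ℝ≥0 := 1 - Hp with hβ
  have hβ0 : β ≠ 0 := by rw [hβ]; exact (tsub_pos_of_lt hHp1).ne'
  have hβ0' : (β : ℝ≥0∞) ≠ 0 := by exact_mod_cast hβ0
  have hβtop : (β : ℝ≥0∞) ≠ ⊤ := ENNReal.coe_ne_top
  have hβr : (β : ℝ) = 1 - (Hp : ℝ) := by
    rw [hβ, NNReal.coe_sub hHple, NNReal.coe_one]
  have hβadd : Hp + β = 1 := by rw [hβ]; exact add_tsub_cancel_of_le hHple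
  have hNx : treeCapAt x (N ∩ bdSub x) = 0 := Aux.null_transfer hN0 x
  -- tail bound for h
  have htail : ∀ ζ ∈ E ∩ bdSub x, ζ ∉ N ∩ bdSub x → (β : ℝ≥0∞) ≤ Aux.Ix x h ζ := by
    intro ζ hζ hζN
    have hζE : ζ ∈ E \ N := ⟨hζ.1, fun hNmem => hζN ⟨hNmem, hζ.2⟩⟩
    have hIh := hadmE ζ hζE
    rw [Aux.tsum_nat_split (fun k => (h (pre ζ k) : ℝ≥0∞)) x.length,
      Aux.head_eq h hx hζ.2] at hIh
    have h2 : (1 : ℝ≥0∞) - (Hp : ℝ≥0∞) ≤ Aux.Ix x h ζ := by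
      rw [tsub_le_iff_left]
      exact hIh
    calc (β : ℝ≥0∞) = (1 : ℝ≥0∞) - (Hp : ℝ≥0∞) := by
          rw [hβ, ENNReal.coe_sub, ENNReal.coe_one]
      _ ≤ Aux.Ix x h ζ := h2
  -- the competitor h/β on the subtree
  set ψ : List Bool → ℝ≥0 := fun l => h l / β with hψ
  have hψcoe : ∀ l, ((ψ l : ℝ≥0∞)) = (h l : ℝ≥0∞) / (β : ℝ≥0∞) := fun l => by
    rw [hψ]; exact ENNReal.coe_div hβ0
  have hEnψ : Aux.En x ψ = Aux.En x h / (β : ℝ≥0∞) ^ 2 := by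
    unfold Aux.En
    rw [div_eq_mul_inv, ← ENNReal.tsum_mul_right]
    refine tsum_congr fun y => ?_
    rw [hψcoe, div_eq_mul_inv, mul_pow, ENNReal.inv_pow]
  have hIxψ : ∀ ζ, Aux.Ix x ψ ζ = Aux.Ix x h ζ * (β : ℝ≥0∞)⁻¹ := by
    intro ζ
    unfold Aux.Ix
    rw [← ENNReal.tsum_mul_right]
    exact tsum_congr fun k => by rw [hψcoe, div_eq_mul_inv]
  have hadmψ : ∀ ζ ∈ E ∩ bdSub x, ζ ∉ N ∩ bdSub x → 1 ≤ Aux.Ix x ψ ζ := by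
    intro ζ hζ hζN
    rw [hIxψ]
    calc (1 : ℝ≥0∞) = (β : ℝ≥0∞) * (β : ℝ≥0∞)⁻¹ := (ENNReal.mul_inv_cancel hβ0' hβtop).symm
      _ ≤ Aux.Ix x h ζ * (β : ℝ≥0∞)⁻¹ := by gcongr; exact htail ζ hζ hζN
  have hB : c ≤ Aux.En x ψ := Aux.qe_le hNx ψ hadmψ
  -- lower bound: En x h / β² ≤ c
  have hA : Aux.En x h / (β : ℝ≥0∞) ^ 2 ≤ c := by
    refine Aux.le_treeCapAt fun φ hφ => ?_
    have hcapg : treeCap E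
        ≤ ∑' l : List Bool, (((fun l => if x <+: l then β * φ l else h l) l : ℝ≥0) : ℝ≥0∞) ^ 2 := by
      rw [Aux.treeCap_eq, ← Aux.En_nil]
      refine Aux.qe_le (N := N) (by rw [← Aux.treeCap_eq]; exact hN0) _ ?_
      intro ζ hζ hζN
      refine Aux.pasted_adm h φ hx β hβadd (hadmE ζ ⟨hζ, hζN⟩) ?_
      intro hbd
      exact hφ ζ ⟨hζ, hbd⟩
    rw [Aux.energy_split _ x, Aux.pasted_energy h φ β x] at hcapg
    have hRg : (∑' (y : ({l : List Bool | x <+: l}ᶜ : Set (List Bool))),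
          (((fun l => if x <+: l then β * φ l else h l) (y : List Bool) : ℝ≥0) : ℝ≥0∞) ^ 2)
        = ∑' (y : ({l : List Bool | x <+: l}ᶜ : Set (List Bool))), (h (y : List Bool) : ℝ≥0∞) ^ 2 := by
      refine tsum_congr fun y => ?_
      have hy : ¬ x <+: (y : List Bool) := y.2
      simp [hy]
    rw [hRg] at hcapg
    have hsplith := Aux.energy_split h x
    rw [← hen, hsplith] at hcapg
    have hRfin : (∑' (y : ({l : List Bool | x <+: l}ᶜ : Set (List Bool))),
        (h (y : List Bool) : ℝ≥0∞) ^ 2) ≠ ⊤ := by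
      refine ne_top_of_le_ne_top hfin ?_
      rw [← hen, hsplith]
      exact le_add_self
    have hkey2 : Aux.En x h ≤ (β : ℝ≥0∞) ^ 2 * Aux.En x φ :=
      (ENNReal.add_le_add_iff_right hRfin).1 hcapg
    rw [ENNReal.div_le_iff (pow_ne_zero 2 hβ0') (by simp [hβtop])]
    rw [mul_comm]
    exact hkey2
  have hcE : c = Aux.En x ψ := le_antisymm hB (by rw [hEnψ]; exact hA)
  -- variational identity at the root of the subtree
  set b₀ : {l : List Bool // x <+: l} := ⟨x, List.prefix_refl x⟩ with hb₀
  set a : ℝ≥0 := ψ x with ha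
  set D : ℝ≥0∞ := ∑' y : {l : List Bool // x <+: l},
      (if y = b₀ then 0 else (ψ (y : List Bool) : ℝ≥0∞) ^ 2) with hD
  have hsplitψ : Aux.En x ψ = (a : ℝ≥0∞) ^ 2 + D := by
    unfold Aux.En
    rw [ENNReal.tsum_eq_add_tsum_ite b₀, hD]
    congr 1
    refine tsum_congr fun y => ?_
    by_cases hy : y = b₀ <;> simp [hy]
  have hcaD : c = (a : ℝ≥0∞) ^ 2 + D := hcE.trans hsplitψ
  have hDfin : D ≠ ⊤ := by
    refine ne_top_of_le_ne_top hcfin ?_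
    rw [hcaD]
    exact le_add_self
  -- inequality family 1
  have hineq1 : ∀ s : ℝ≥0, s ≤ 1 →
      c ≤ ((((1 - s) * a + s : ℝ≥0)) : ℝ≥0∞) ^ 2 + (((1 - s : ℝ≥0)) : ℝ≥0∞) ^ 2 * D := by
    intro s hs
    set g1 : List Bool → ℝ≥0 := fun l => (1 - s) * ψ l + (if l = x then s else 0) with hg1
    have hadm1 : ∀ ζ ∈ E ∩ bdSub x, ζ ∉ N ∩ bdSub x → 1 ≤ Aux.Ix x g1 ζ := by
      intro ζ hζ hζN
      have hIxg : Aux.Ix x g1 ζ = ((1 - s : ℝ≥0) : ℝ≥0∞) * Aux.Ix x ψ ζ + (s : ℝ≥0∞) := by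
        unfold Aux.Ix
        have hterm : ∀ k : ℕ, ((g1 (pre ζ (x.length + k)) : ℝ≥0) : ℝ≥0∞)
            = ((1 - s : ℝ≥0) : ℝ≥0∞) * (ψ (pre ζ (x.length + k)) : ℝ≥0∞)
              + ((if pre ζ (x.length + k) = x then s else 0 : ℝ≥0) : ℝ≥0∞) := by
          intro k
          rw [hg1]
          push_cast
          ring
        rw [tsum_congr hterm, ENNReal.tsum_add, ENNReal.tsum_mul_left,
          Aux.tsum_delta hζ.2 s]
      rw [hIxg]
      calc (1 : ℝ≥0∞) = ((1 - s : ℝ≥0) : ℝ≥0∞) * 1 + (s : ℝ≥0∞) := by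
            rw [mul_one, ← ENNReal.coe_add, tsub_add_cancel_of_le hs, ENNReal.coe_one]
        _ ≤ ((1 - s : ℝ≥0) : ℝ≥0∞) * Aux.Ix x ψ ζ + (s : ℝ≥0∞) := by
            gcongr
            exact hadmψ ζ hζ hζN
    have hen1 : Aux.En x g1
        = ((((1 - s) * a + s : ℝ≥0)) : ℝ≥0∞) ^ 2 + (((1 - s : ℝ≥0)) : ℝ≥0∞) ^ 2 * D := by
      rw [hD, hb₀]
      refine Aux.energy_ite ψ x (1 - s) ((1 - s) * a + s) g1 ?_ ?_
      · rw [hg1]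
        simp [ha]
      · intro l hpre hne
        rw [hg1]
        simp [hne]
    exact (Aux.qe_le hNx g1 hadm1).trans (le_of_eq hen1)
  -- inequality family 2
  have hineq2 : ∀ s : ℝ≥0, s ≤ a →
      c ≤ ((((1 + s) * a - s : ℝ≥0)) : ℝ≥0∞) ^ 2 + (((1 + s : ℝ≥0)) : ℝ≥0∞) ^ 2 * D := by
    intro s hs
    set g2 : List Bool → ℝ≥0 := fun l => (1 + s) * ψ l - (if l = x then s else 0) with hg2
    have hsX : s ≤ (1 + s) * a := le_trans hs (le_mul_of_one_le_left zero_le le_self_add)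
    have hadm2 : ∀ ζ ∈ E ∩ bdSub x, ζ ∉ N ∩ bdSub x → 1 ≤ Aux.Ix x g2 ζ := by
      intro ζ hζ hζN
      have hIψ := hadmψ ζ hζ hζN
      -- split both Ix's at 0
      have hsplitIψ : Aux.Ix x ψ ζ
          = (a : ℝ≥0∞) + ∑' k : ℕ, (ψ (pre ζ (x.length + (1 + k))) : ℝ≥0∞) := by
        unfold Aux.Ix
        rw [Aux.tsum_nat_split (fun k => (ψ (pre ζ (x.length + k)) : ℝ≥0∞)) 1,
          Finset.sum_range_one]
        congr 2
        rw [show pre ζ (x.length + 0) = x from hζ.2, ha]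
      set T : ℝ≥0∞ := ∑' k : ℕ, (ψ (pre ζ (x.length + (1 + k))) : ℝ≥0∞) with hT
      have hsplitIg : Aux.Ix x g2 ζ
          = (((1 + s) * a - s : ℝ≥0) : ℝ≥0∞) + ((1 + s : ℝ≥0) : ℝ≥0∞) * T := by
        unfold Aux.Ix
        rw [Aux.tsum_nat_split (fun k => (g2 (pre ζ (x.length + k)) : ℝ≥0∞)) 1,
          Finset.sum_range_one]
        congr 1
        · congr 1
          have hpz : pre ζ (x.length + 0) = x := hζ.2
          rw [hpz, hg2]
          simp [ha]
        · rw [hT, ← ENNReal.tsum_mul_left]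
          refine tsum_congr fun k => ?_
          have hne : pre ζ (x.length + (1 + k)) ≠ x := by
            intro hcon
            have := congrArg List.length hcon
            simp at this
          rw [hg2]
          simp only [if_neg hne, tsub_zero]
          push_cast
          ring
      rw [hsplitIg]
      have hXY : ((1 + s : ℝ≥0) : ℝ≥0∞)
          ≤ (((1 + s) * a : ℝ≥0) : ℝ≥0∞) + ((1 + s : ℝ≥0) : ℝ≥0∞) * T := by
        have : (((1 + s) * a : ℝ≥0) : ℝ≥0∞) + ((1 + s : ℝ≥0) : ℝ≥0∞) * T
            = ((1 + s : ℝ≥0) : ℝ≥0∞) * Aux.Ix x ψ ζ := by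
          rw [hsplitIψ, mul_add]
          push_cast
          ring
        rw [this]
        calc ((1 + s : ℝ≥0) : ℝ≥0∞) = ((1 + s : ℝ≥0) : ℝ≥0∞) * 1 := (mul_one _).symm
          _ ≤ ((1 + s : ℝ≥0) : ℝ≥0∞) * Aux.Ix x ψ ζ := by gcongr
      calc (1 : ℝ≥0∞) = ((1 + s : ℝ≥0) : ℝ≥0∞) - (s : ℝ≥0∞) := by
            rw [← ENNReal.coe_sub, add_tsub_cancel_right, ENNReal.coe_one]
        _ ≤ ((((1 + s) * a : ℝ≥0) : ℝ≥0∞) + ((1 + s : ℝ≥0) : ℝ≥0∞) * T) - (s : ℝ≥0∞) :=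
            tsub_le_tsub_right hXY _
        _ ≤ (((1 + s) * a - s : ℝ≥0) : ℝ≥0∞) + ((1 + s : ℝ≥0) : ℝ≥0∞) * T := by
            rw [tsub_le_iff_right]
            rw [ENNReal.coe_sub]
            rw [add_right_comm]
            gcongr
            rw [tsub_add_cancel_of_le]
            exact_mod_cast hsX
    have hen2 : Aux.En x g2
        = ((((1 + s) * a - s : ℝ≥0)) : ℝ≥0∞) ^ 2 + (((1 + s : ℝ≥0)) : ℝ≥0∞) ^ 2 * D := by
      rw [hD, hb₀]
      refine Aux.energy_ite ψ x (1 + s) ((1 + s) * a - s) g2 ?_ ?_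
      · rw [hg2]
        simp [ha]
      · intro l hpre hne
        rw [hg2]
        simp [hne]
    exact (Aux.qe_le hNx g2 hadm2).trans (le_of_eq hen2)
  -- pass to real numbers
  set A : ℝ := c.toReal with hA'
  set Dr : ℝ := D.toReal with hDr
  set α : ℝ := (a : ℝ) with hα
  have hDr0 : 0 ≤ Dr := ENNReal.toReal_nonneg
  have hα0 : 0 ≤ α := a.coe_nonneg
  have hADr : A = α ^ 2 + Dr := by
    rw [hA', hcaD, ENNReal.toReal_add (by simp) hDfin]
    simp [hα, hDr]
  have hr1 : ∀ s : ℝ≥0, s ≤ 1 → A ≤ ((1 - (s:ℝ)) * α + s) ^ 2 + (1 - (s:ℝ)) ^ 2 * Dr := by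
    intro s hs
    have := hineq1 s hs
    have h2 := ENNReal.toReal_mono (by
      refine ENNReal.add_ne_top.2 ⟨ENNReal.pow_ne_top ENNReal.coe_ne_top, ?_⟩
      exact ENNReal.mul_ne_top (ENNReal.pow_ne_top ENNReal.coe_ne_top) hDfin) this
    rw [ENNReal.toReal_add (ENNReal.pow_ne_top ENNReal.coe_ne_top)
        (ENNReal.mul_ne_top (ENNReal.pow_ne_top ENNReal.coe_ne_top) hDfin),
      ENNReal.toReal_mul] at h2
    simp only [ENNReal.toReal_pow, ENNReal.coe_toReal] at h2
    refine le_trans (le_of_eq hA') (h2.trans (le_of_eq ?_))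
    rw [hα, hDr]
    push_cast
    rw [NNReal.coe_sub hs]
    push_cast
    ring
  have hr2 : ∀ s : ℝ≥0, s ≤ a → A ≤ ((1 + (s:ℝ)) * α - s) ^ 2 + (1 + (s:ℝ)) ^ 2 * Dr := by
    intro s hs
    have := hineq2 s hs
    have h2 := ENNReal.toReal_mono (by
      refine ENNReal.add_ne_top.2 ⟨ENNReal.pow_ne_top ENNReal.coe_ne_top, ?_⟩
      exact ENNReal.mul_ne_top (ENNReal.pow_ne_top ENNReal.coe_ne_top) hDfin) this
    rw [ENNReal.toReal_add (ENNReal.pow_ne_top ENNReal.coe_ne_top)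
        (ENNReal.mul_ne_top (ENNReal.pow_ne_top ENNReal.coe_ne_top) hDfin),
      ENNReal.toReal_mul] at h2
    simp only [ENNReal.toReal_pow, ENNReal.coe_toReal] at h2
    refine le_trans (le_of_eq hA') (h2.trans (le_of_eq ?_))
    have hsX : s ≤ (1 + s) * a := le_trans hs (le_mul_of_one_le_left zero_le le_self_add)
    rw [hα, hDr]
    push_cast
    rw [NNReal.coe_sub hsX]
    push_cast
    ring
  -- first conclusion : α(1-α) - Dr ≥ 0
  have hK1 : 0 ≤ α * (1 - α) - Dr := by
    refine Aux.aux_nonneg (C := (1 - α) ^ 2 + Dr) (by positivity) one_pos ?_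
    intro s hs0 hs1
    have hsnn : s = ((s.toNNReal : ℝ≥0) : ℝ) := by
      rw [Real.coe_toNNReal _ (le_of_lt hs0)]
    have hle : (s.toNNReal : ℝ≥0) ≤ 1 := by
      rw [← NNReal.coe_le_coe, ← hsnn]
      simpa using hs1
    have := hr1 s.toNNReal hle
    rw [← hsnn] at this
    rw [hADr] at this
    nlinarith [this]
  -- second conclusion
  have hK2 : 0 ≤ Dr - α * (1 - α) := by
    rcases eq_or_lt_of_le (zero_le : (0:ℝ≥0) ≤ a) with ha0 | ha0
    · -- a = 0 : α = 0 and then K1 gives Dr ≤ 0 hence Dr = 0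
      have : α = 0 := by rw [hα, ← ha0]; simp
      rw [this]
      simp [hDr0]
    · have hα0' : (0:ℝ) < α := by
        rw [hα]
        exact_mod_cast ha0
      refine Aux.aux_nonneg (C := (α - 1) ^ 2 + Dr) (by positivity) hα0' ?_
      intro s hs0 hsδ
      have hsnn : s = ((s.toNNReal : ℝ≥0) : ℝ) := (Real.coe_toNNReal _ (le_of_lt hs0)).symm
      have hle : s.toNNReal ≤ a := by
        rw [← NNReal.coe_le_coe, ← hsnn]
        exact hsδ
      have h2 := hr2 s.toNNReal hle
      rw [← hsnn, hADr] at h2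
      nlinarith [h2]
  have hDra : Dr = α * (1 - α) := le_antisymm (by linarith) (by linarith)
  have hAα : A = α := by rw [hADr, hDra]; ring
  -- final algebra
  have hhxa : (h x : ℝ) = α * (β : ℝ) := by
    rw [hα, ha, hψ]
    have : (h x / β) * β = h x := div_mul_cancel₀ _ hβ0
    rw [← this]
    push_cast
    ring
  rw [hhxa, hβr, hAα]
  ring
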